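/- There exist an environment θ∈Θ and a constant c>0 such that for every α∈[0,1) there exist an α-consistent policy and a suboptimal arm k with liminf_{n→∞} E_θ[T_k(n)] / ((1−α)·log n) ≤ c. Concretely, for θ=(δ_a,δ_b) with 0≤b<a≤1 and Δ=a−b, the policy UCB((1−α)/2) is α-consistent and satisfies liminf_{n→∞} E_θ[T_2(n)] / ((1−α)·log n) ≤ 1/(2Δ²). -/

import Mathlib

open MeasureTheory ProbabilityTheory Filter Asymptotics

noncomputable section

namespace Bandit

/-- Empirical mean of the first `s` values of the sequence `x`. -/
def empMean (x : ℕ → ℝ) (s : ℕ) : ℝ := (∑ u ∈ Finset.range s, x u) / s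

/-- An element of `Fin K` maximizing `g`. -/
def argmaxFin {K : ℕ} (hK : 0 < K) (g : Fin K → ℝ) : Fin K :=
  (Finset.univ.exists_max_image g ⟨⟨0, hK⟩, Finset.mem_univ _⟩).choose

theorem argmaxFin_spec {K : ℕ} (hK : 0 < K) (g : Fin K → ℝ) (j : Fin K) :
    g j ≤ g (argmaxFin hK g) := by
  have h := (Finset.univ.exists_max_image g ⟨⟨0, hK⟩, Finset.mem_univ _⟩).choose_spec
  exact h.2 j (Finset.mem_univ j)

/-- The arm pulled at round `t` by a generalized UCB policy with exploration functions `f`,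
given the reward table `x` (where `x k u` is the reward of the `(u+1)`-th pull of arm `k`)
and the vector `T` of numbers of pulls of each arm before round `t`.
During the first `K` rounds (`t ≤ K`), each arm is pulled once; afterwards an arm maximizing
the UCB index `X̂_{k,T_k(t-1)} + √(f_k(t) / T_k(t-1))` is pulled. -/
def ucbArmAux {K : ℕ} (hK : 0 < K) (f : Fin K → ℕ → ℝ) (x : Fin K → ℕ → ℝ)
    (T : Fin K → ℕ) (t : ℕ) : Fin K :=
  if h : t ≤ K then ⟨t - 1, by omega⟩
  else argmaxFin hK fun j => empMean (x j) (T j) + Real.sqrt (f j t / (T j : ℝ))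

/-- `ucbCount hK f x t k` is `T_k(t)`, the number of pulls of arm `k` during rounds `1,…,t`
by the generalized UCB policy with exploration functions `f` on the reward table `x`. -/
def ucbCount {K : ℕ} (hK : 0 < K) (f : Fin K → ℕ → ℝ) (x : Fin K → ℕ → ℝ) :
    ℕ → Fin K → ℕ
  | 0, _ => 0
  | t + 1, k =>
    ucbCount hK f x t k + if ucbArmAux hK f x (ucbCount hK f x t) (t + 1) = k then 1 else 0

/-- The arm pulled at round `t ≥ 1` by the generalized UCB policy. -/
def ucbArm {K : ℕ} (hK : 0 < K) (f : Fin K → ℕ → ℝ) (x : Fin K → ℕ → ℝ) (t : ℕ) : Fin K :=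
  ucbArmAux hK f x (ucbCount hK f x (t - 1)) t

/-- The exploration function of the UCB(ρ) policy: `f_k(t) = ρ log t` for every arm. -/
def rhoLog {K : ℕ} (ρ : ℝ) : Fin K → ℕ → ℝ := fun _ t => ρ * Real.log t

/-- The reward table of the two-armed deterministic environment `θ = (δ_a, δ_b)`:
arm `0` always gives `a` and arm `1` always gives `b`. -/
def diracTable (a b : ℝ) : Fin 2 → ℕ → ℝ := fun k _ => if k = 0 then a else b

end Bandit
namespace Bandit

/-- `ν` is a valid bandit environment: each arm's reward distribution is a probability
measure on `[0,1]`. -/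
def IsEnv {K : ℕ} (ν : Fin K → Measure ℝ) : Prop :=
  ∀ k, IsProbabilityMeasure (ν k) ∧ ν k (Set.Icc 0 1) = 1

/-- The mean of a reward distribution. -/
def mean (ν : Measure ℝ) : ℝ := ∫ x, x ∂ν

/-- `μ* = max_k μ_k`, the best mean reward of the environment `ν`. -/
def bestMean {K : ℕ} (hK : 0 < K) (ν : Fin K → Measure ℝ) : ℝ :=
  Finset.univ.sup' ⟨⟨0, hK⟩, Finset.mem_univ _⟩ fun k => mean (ν k)

/-- `Δ_k = μ* - μ_k`, the optimality gap of arm `k` in the environment `ν`. -/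
def gap {K : ℕ} (hK : 0 < K) (ν : Fin K → Measure ℝ) (k : Fin K) : ℝ :=
  bestMean hK ν - mean (ν k)

/-- `X` is a reward table process on `(Ω, P)` for the environment `ν`: the random variables
`X k u` (the reward of the `(u+1)`-th pull of arm `k`) are mutually independent, take values
in `[0,1]`, and `X k u` has distribution `ν k` for every `u`. -/
def IsRewardTable {K : ℕ} {Ω : Type*} [MeasurableSpace Ω] (P : Measure Ω)
    (ν : Fin K → Measure ℝ) (X : Fin K → ℕ → Ω → ℝ) : Prop :=
  (∀ k u, Measurable (X k u)) ∧
  (∀ k u ω, X k u ω ∈ Set.Icc (0 : ℝ) 1) ∧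
  (∀ k u, Measure.map (X k u) P = ν k) ∧
  iIndepFun (fun p : Fin K × ℕ => X p.1 p.2) P

/-- `E_θ[T_k(n)]`, the expected number of pulls of arm `k` up to round `n`, for the
generalized UCB policy with exploration functions `f`. -/
def ucbExpCount {K : ℕ} (hK : 0 < K) (f : Fin K → ℕ → ℝ) {Ω : Type*} [MeasurableSpace Ω]
    (P : Measure Ω) (X : Fin K → ℕ → Ω → ℝ) (n : ℕ) (k : Fin K) : ℝ :=
  ∫ ω, (ucbCount hK f (fun j u => X j u ω) n k : ℝ) ∂P

/-- `E_θ[R_n] = ∑_k Δ_k E_θ[T_k(n)]`, the expected regret at horizon `n` of the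
generalized UCB policy with exploration functions `f` in the environment `ν`. -/
def ucbRegret {K : ℕ} (hK : 0 < K) (f : Fin K → ℕ → ℝ) {Ω : Type*} [MeasurableSpace Ω]
    (P : Measure Ω) (ν : Fin K → Measure ℝ) (X : Fin K → ℕ → Ω → ℝ) (n : ℕ) : ℝ :=
  ∑ k, gap hK ν k * ucbExpCount hK f P X n k

end Bandit
namespace Bandit

/-- The family `Θ_k` of sets of admissible reward distributions per arm, as in the paper:
each `Θ_k` consists of probability measures on `[0,1]` and contains every two-point
distribution `p δ_a + (1-p) δ_b` with `p, a, b ∈ [0,1]`. -/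
def Admissible {K : ℕ} (Θk : Fin K → Set (Measure ℝ)) : Prop :=
  (∀ k, ∀ ν ∈ Θk k, IsProbabilityMeasure ν ∧ ν (Set.Icc 0 1) = 1) ∧
  (∀ k, ∀ p a b : ℝ, p ∈ Set.Icc (0 : ℝ) 1 → a ∈ Set.Icc (0 : ℝ) 1 → b ∈ Set.Icc (0 : ℝ) 1 →
    ENNReal.ofReal p • Measure.dirac a + ENNReal.ofReal (1 - p) • Measure.dirac b ∈ Θk k)

/-- `Θ = Θ_1 × … × Θ_K`, the set of admissible environments. -/
def envSet {K : ℕ} (Θk : Fin K → Set (Measure ℝ)) : Set (Fin K → Measure ℝ) :=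
  {θ | ∀ k, θ k ∈ Θk k}

end Bandit
namespace Bandit


/-- Core analytic inequality behind Hoeffding's lemma. -/
theorem hoeffding_core {p : ℝ} (hp0 : 0 ≤ p) (hp1 : p ≤ 1) (l : ℝ) :
    (1 - p) * Real.exp (-p * l) + p * Real.exp ((1 - p) * l) ≤ Real.exp (l ^ 2 / 8) := by
  set D : ℝ → ℝ := fun y => 1 - p + p * Real.exp y with hDdef
  have hD : ∀ y, 0 < D y := by
    intro y
    rcases eq_or_lt_of_le hp0 with h | h
    · simp [hDdef, ← h]
    · have := Real.exp_pos y
      have : 0 < p * Real.exp y := by positivity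
      simp only [hDdef]; linarith
  set g : ℝ → ℝ := fun y => Real.log (D y) - p * y with hgdef
  set g' : ℝ → ℝ := fun y => p * Real.exp y / D y - p with hg'def
  have hgD : ∀ y, HasDerivAt D (p * Real.exp y) y := by
    intro y
    exact (((Real.hasDerivAt_exp y).const_mul p).const_add (1 - p))
  have hg : ∀ y, HasDerivAt g (g' y) y := by
    intro y
    have h1 : HasDerivAt (fun y => Real.log (D y)) (p * Real.exp y / D y) y :=
      (hgD y).log (hD y).ne'
    exact (h1.sub ((hasDerivAt_id y).const_mul p)).congr_deriv (by simp [hg'def])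
  set g'' : ℝ → ℝ := fun y => p * Real.exp y * (1 - p) / (D y) ^ 2 with hg''def
  have hg' : ∀ y, HasDerivAt g' (g'' y) y := by
    intro y
    have h1 : HasDerivAt (fun y => p * Real.exp y) (p * Real.exp y) y :=
      (Real.hasDerivAt_exp y).const_mul p
    have h2 := h1.div (hgD y) (hD y).ne'
    have h3 : (p * Real.exp y * D y - p * Real.exp y * (p * Real.exp y)) / (D y) ^ 2
        = g'' y := by
      simp only [hg''def, hDdef]; ring
    have := h2.sub_const p
    rw [h3] at this
    simpa [hg'def] using this
  have hg''le : ∀ y, g'' y ≤ 1 / 4 := by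
    intro y
    rw [hg''def, div_le_iff₀ (pow_pos (hD y) 2)]
    have h4 : 0 ≤ (1 - p - p * Real.exp y) ^ 2 := sq_nonneg _
    have hpe : 0 ≤ p * Real.exp y := by positivity
    simp only [hDdef]
    nlinarith [sq_nonneg (1 - p + p * Real.exp y)]
  -- h := l^2/8 - g, h' := l/4 - g'
  set h : ℝ → ℝ := fun y => y ^ 2 / 8 - g y with hhdef
  set h' : ℝ → ℝ := fun y => y / 4 - g' y with hh'def
  have hh : ∀ y, HasDerivAt h (h' y) y := by
    intro y
    have h1 : HasDerivAt (fun y : ℝ => y ^ 2 / 8) (y / 4) y := by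
      have := (hasDerivAt_pow 2 y).div_const 8
      simpa using this.congr_deriv (by ring)
    exact h1.sub (hg y)
  have hh' : ∀ y, HasDerivAt h' (1 / 4 - g'' y) y := by
    intro y
    have h1 : HasDerivAt (fun y : ℝ => y / 4) (1 / 4) y := by
      simpa using (hasDerivAt_id y).div_const 4
    exact h1.sub (hg' y)
  have hmono : Monotone h' := by
    apply monotone_of_deriv_nonneg
    · exact fun y => (hh' y).differentiableAt
    · intro y
      rw [(hh' y).deriv]
      linarith [hg''le y]
  have hD0 : D 0 = 1 := by simp [hDdef]
  have hg'0 : g' 0 = 0 := by simp [hg'def, hD0]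
  have hh'0 : h' 0 = 0 := by simp [hh'def, hg'0]
  have hg0 : g 0 = 0 := by simp [hgdef, hD0]
  have hh0 : h 0 = 0 := by simp [hhdef, hg0]
  have hdiffh : Differentiable ℝ h := fun y => (hh y).differentiableAt
  have hkey : ∀ y, 0 ≤ h y := by
    intro y
    rcases le_total 0 y with hy | hy
    · have hmOn : MonotoneOn h (Set.Ici (0 : ℝ)) := by
        apply monotoneOn_of_deriv_nonneg (convex_Ici 0) (hdiffh.continuous.continuousOn)
        · exact fun z _ => (hh z).differentiableAt.differentiableWithinAt
        · intro z hz
          rw [(hh z).deriv, ← hh'0]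
          exact hmono (le_of_lt (by simpa using hz))
      have := hmOn (Set.mem_Ici.2 le_rfl) (Set.mem_Ici.2 hy) hy
      rwa [hh0] at this
    · have hmOn : AntitoneOn h (Set.Iic (0 : ℝ)) := by
        apply antitoneOn_of_deriv_nonpos (convex_Iic 0) (hdiffh.continuous.continuousOn)
        · exact fun z _ => (hh z).differentiableAt.differentiableWithinAt
        · intro z hz
          rw [(hh z).deriv, ← hh'0]
          exact hmono (le_of_lt (by simpa using hz))
      have := hmOn (Set.mem_Iic.2 hy) (Set.mem_Iic.2 le_rfl) hy
      rwa [hh0] at this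
  have hgle : g l ≤ l ^ 2 / 8 := by have := hkey l; simp only [hhdef] at this; linarith
  have hLHS : (1 - p) * Real.exp (-p * l) + p * Real.exp ((1 - p) * l)
      = Real.exp (g l) := by
    rw [hgdef]
    simp only
    rw [Real.exp_sub, Real.exp_log (hD l), show (1 - p) * l = l - p * l by ring,
      Real.exp_sub, show -p * l = -(p * l) by ring, Real.exp_neg]
    simp only [hDdef]
    field_simp
  rw [hLHS]
  exact Real.exp_le_exp.2 hgle


/-- Hoeffding's lemma (uncentered form) for a random variable in `[c, c+1]`. -/
theorem mgf_le_hoeffding {Ω : Type*} [MeasurableSpace Ω] {P : Measure Ω}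
    [IsProbabilityMeasure P] {Y : Ω → ℝ} (hm : Measurable Y) {c : ℝ}
    (hb : ∀ ω, Y ω ∈ Set.Icc c (c + 1)) (l : ℝ) :
    mgf Y P l ≤ Real.exp (l * (∫ ω, Y ω ∂P) + l ^ 2 / 8) := by
  have hYint : Integrable Y P := by
    refine (integrable_const (|c| + 1)).mono' hm.aestronglyMeasurable ?_
    filter_upwards with ω
    have h := hb ω
    rw [Real.norm_eq_abs, abs_le]
    constructor
    · have := h.1; have := neg_abs_le c; linarith
    · have := h.2; have := le_abs_self c; linarith
  set m : ℝ := ∫ ω, Y ω ∂P with hmdef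
  have hcm : c ≤ m := by
    have : ∫ _ω, c ∂P ≤ ∫ ω, Y ω ∂P :=
      integral_mono (integrable_const c) hYint fun ω => (hb ω).1
    simpa using this
  have hmc : m ≤ c + 1 := by
    have : ∫ ω, Y ω ∂P ≤ ∫ _ω, (c + 1) ∂P :=
      integral_mono hYint (integrable_const (c + 1)) fun ω => (hb ω).2
    simpa using this
  -- chord bound pointwise
  set A : ℝ := (c + 1) * Real.exp (l * c) - c * Real.exp (l * (c + 1)) with hAdef
  set B : ℝ := Real.exp (l * (c + 1)) - Real.exp (l * c) with hBdef
  have hchord : ∀ ω, Real.exp (l * Y ω) ≤ A + B * Y ω := by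
    intro ω
    obtain ⟨h1, h2⟩ := hb ω
    have key : Real.exp ((c + 1 - Y ω) * (l * c) + (Y ω - c) * (l * (c + 1)))
        ≤ (c + 1 - Y ω) * Real.exp (l * c) + (Y ω - c) * Real.exp (l * (c + 1)) :=
      convexOn_exp.2 (Set.mem_univ _) (Set.mem_univ _) (by linarith) (by linarith)
        (by ring)
    have harg : (c + 1 - Y ω) * (l * c) + (Y ω - c) * (l * (c + 1)) = l * Y ω := by ring
    rw [harg] at key
    calc Real.exp (l * Y ω) ≤ (c + 1 - Y ω) * Real.exp (l * c)
          + (Y ω - c) * Real.exp (l * (c + 1)) := key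
      _ = A + B * Y ω := by rw [hAdef, hBdef]; ring
  have hint : Integrable (fun ω => A + B * Y ω) P :=
    (integrable_const A).add (hYint.const_mul B)
  have h1 : mgf Y P l ≤ A + B * m := by
    rw [mgf]
    calc ∫ ω, Real.exp (l * Y ω) ∂P ≤ ∫ ω, (A + B * Y ω) ∂P := by
          refine integral_mono_of_nonneg ?_ hint ?_
          · filter_upwards with ω using (Real.exp_pos _).le
          · filter_upwards with ω using hchord ω
      _ = A + B * m := by
          rw [integral_add (integrable_const A) (hYint.const_mul B),
            MeasureTheory.integral_const_mul, integral_const]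
          simp [hmdef]
  refine h1.trans ?_
  -- now the analytic bound with p := m - c
  set p : ℝ := m - c with hpdef
  have hp0 : 0 ≤ p := by linarith
  have hp1 : p ≤ 1 := by linarith
  have key := hoeffding_core hp0 hp1 l
  have he1 : Real.exp (l * c) = Real.exp (l * m) * Real.exp (-p * l) := by
    rw [← Real.exp_add]; congr 1; rw [hpdef]; ring
  have he2 : Real.exp (l * (c + 1)) = Real.exp (l * m) * Real.exp ((1 - p) * l) := by
    rw [← Real.exp_add]; congr 1; rw [hpdef]; ring
  have hAB : A + B * m = Real.exp (l * m) *
      ((1 - p) * Real.exp (-p * l) + p * Real.exp ((1 - p) * l)) := by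
    rw [hAdef, hBdef, he1, he2, hpdef]; ring
  rw [hAB, Real.exp_add]
  exact mul_le_mul_of_nonneg_left key (Real.exp_pos _).le

/-- Hoeffding's inequality for finitely many independent random variables with
values in intervals of length 1. -/
theorem hoeffding_inequality {ι : Type*} {Ω : Type*} [MeasurableSpace Ω] {P : Measure Ω}
    [IsProbabilityMeasure P] {Y : ι → Ω → ℝ}
    (hindep : iIndepFun Y P) (hm : ∀ i, Measurable (Y i))
    {c : ℝ} (hb : ∀ i ω, Y i ω ∈ Set.Icc c (c + 1)) (s : Finset ι) {ε : ℝ} (hε : 0 ≤ ε) :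
    (P {ω | (∑ i ∈ s, ∫ ω', Y i ω' ∂P) + s.card * ε ≤ ∑ i ∈ s, Y i ω}).toReal
      ≤ Real.exp (-2 * s.card * ε ^ 2) := by
  classical
  set M : ℝ := ∑ i ∈ s, ∫ ω', Y i ω' ∂P with hMdef
  set S : Ω → ℝ := ∑ i ∈ s, Y i with hSdef
  have hSapp : ∀ ω, S ω = ∑ i ∈ s, Y i ω := fun ω => by
    rw [hSdef]; simp [Finset.sum_apply]
  have hSmeas : Measurable S := by
    have := Finset.measurable_sum s fun i (_ : i ∈ s) => hm i
    intro t ht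
    have h2 := this ht
    convert h2 using 2
    ext ω
    rw [hSapp]
  have hSbound : ∀ ω, |S ω| ≤ s.card * (|c| + 1) := by
    intro ω
    rw [hSapp]
    calc |∑ i ∈ s, Y i ω| ≤ ∑ i ∈ s, |Y i ω| := Finset.abs_sum_le_sum_abs _ _
      _ ≤ ∑ _i ∈ s, (|c| + 1) := by
          refine Finset.sum_le_sum fun i _ => ?_
          obtain ⟨h1, h2⟩ := hb i ω
          rw [abs_le]
          refine ⟨?_, ?_⟩
          · have := neg_abs_le c; linarith
          · have := le_abs_self c; linarith
      _ = s.card * (|c| + 1) := by rw [Finset.sum_const, nsmul_eq_mul]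
  have hint : Integrable (fun ω => Real.exp (4 * ε * S ω)) P := by
    refine (integrable_const (Real.exp (4 * ε * (s.card * (|c| + 1))))).mono'
      ((hSmeas.const_mul _).exp).aestronglyMeasurable ?_
    filter_upwards with ω
    rw [Real.norm_eq_abs, abs_of_pos (Real.exp_pos _), Real.exp_le_exp]
    have h1 : S ω ≤ s.card * (|c| + 1) := (abs_le.1 (hSbound ω)).2
    nlinarith [hSbound ω, abs_nonneg (S ω)]
  have hcher := measure_ge_le_exp_mul_mgf (X := S) (μ := P) (t := 4 * ε)
    (M + s.card * ε) (by positivity) hint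
  have hset : {ω | M + s.card * ε ≤ S ω} = {ω | M + s.card * ε ≤ ∑ i ∈ s, Y i ω} := by
    ext ω; simp [hSapp]
  rw [hset] at hcher
  refine hcher.trans ?_
  have hmgf : mgf S P (4 * ε) = ∏ i ∈ s, mgf (Y i) P (4 * ε) := by
    rw [hSdef]; exact hindep.mgf_sum hm s
  have hprod : ∏ i ∈ s, mgf (Y i) P (4 * ε)
      ≤ ∏ i ∈ s, Real.exp (4 * ε * (∫ ω', Y i ω' ∂P) + (4 * ε) ^ 2 / 8) := by
    refine Finset.prod_le_prod (fun i _ => mgf_nonneg) fun i _ => ?_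
    exact mgf_le_hoeffding (hm i) (hb i) (4 * ε)
  have hprodexp : ∏ i ∈ s, Real.exp (4 * ε * (∫ ω', Y i ω' ∂P) + (4 * ε) ^ 2 / 8)
      = Real.exp (4 * ε * M + s.card * ((4 * ε) ^ 2 / 8)) := by
    rw [← Real.exp_sum]
    congr 1
    rw [Finset.sum_add_distrib, Finset.sum_const, ← Finset.mul_sum, hMdef]
    ring
  calc Real.exp (-(4 * ε) * (M + s.card * ε)) * mgf S P (4 * ε)
      ≤ Real.exp (-(4 * ε) * (M + s.card * ε)) *
        Real.exp (4 * ε * M + s.card * ((4 * ε) ^ 2 / 8)) := by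
        rw [hmgf]
        exact mul_le_mul_of_nonneg_left (hprod.trans_eq hprodexp) (Real.exp_pos _).le
    _ = Real.exp (-2 * s.card * ε ^ 2) := by
        rw [← Real.exp_add]; congr 1; ring


end Bandit
namespace Bandit

section Counting

variable {f : Fin 2 → ℕ → ℝ} {x : Fin 2 → ℕ → ℝ} (hK : 0 < 2)

theorem ucbCount_succ (t : ℕ) (k : Fin 2) :
    ucbCount hK f x (t + 1) k = ucbCount hK f x t k +
      if ucbArmAux hK f x (ucbCount hK f x t) (t + 1) = k then 1 else 0 := rfl

theorem ucbCount_le_self (n : ℕ) (k : Fin 2) : ucbCount hK f x n k ≤ n := by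
  induction n with
  | zero => simp [ucbCount]
  | succ t ih =>
    rw [ucbCount_succ]
    split <;> omega

theorem ucbCount_mono {n m : ℕ} (h : n ≤ m) (k : Fin 2) :
    ucbCount hK f x n k ≤ ucbCount hK f x m k := by
  induction m with
  | zero =>
    have : n = 0 := by omega
    subst this; exact le_rfl
  | succ t ih =>
    rcases Nat.lt_or_ge n (t + 1) with h' | h'
    · have h1 := ih (by omega)
      rw [ucbCount_succ]
      split <;> omega
    · have : n = t + 1 := by omega
      subst this; exact le_rfl

theorem ucbCount_eq_card (n : ℕ) (k : Fin 2) :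
    ucbCount hK f x n k = ((Finset.range n).filter
      (fun t => ucbArmAux hK f x (ucbCount hK f x t) (t + 1) = k)).card := by
  induction n with
  | zero => simp [ucbCount]
  | succ t ih =>
    rw [ucbCount_succ, Finset.range_add_one, Finset.filter_insert]
    split
    · rw [Finset.card_insert_of_notMem (by simp), ih]
    · rw [ih, add_zero]

theorem ucbCount_lt_of_pull {t t' : ℕ} (h : t < t') (k : Fin 2)
    (hp : ucbArmAux hK f x (ucbCount hK f x t) (t + 1) = k) :
    ucbCount hK f x t k < ucbCount hK f x t' k := by
  have h1 : ucbCount hK f x (t + 1) k = ucbCount hK f x t k + 1 := by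
    rw [ucbCount_succ, if_pos hp]
  have h2 : ucbCount hK f x (t + 1) k ≤ ucbCount hK f x t' k :=
    ucbCount_mono (f := f) (x := x) hK (show t + 1 ≤ t' by omega) k
  omega

theorem ucbCount_two (k : Fin 2) : ucbCount hK f x 2 k = 1 := by
  have h0 : ucbArmAux hK f x (ucbCount hK f x 0) 1 = ⟨0, by omega⟩ := by
    rw [ucbArmAux, dif_pos (by norm_num)]
  have h1 : ucbArmAux hK f x (ucbCount hK f x 1) 2 = ⟨1, by omega⟩ := by
    rw [ucbArmAux, dif_pos (by norm_num)]
  have e : ucbCount hK f x 2 k = (ucbCount hK f x 0 k +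
      if ucbArmAux hK f x (ucbCount hK f x 0) 1 = k then 1 else 0) +
      if ucbArmAux hK f x (ucbCount hK f x 1) 2 = k then 1 else 0 := rfl
  rw [e, h0, h1]
  have e0 : ucbCount hK f x 0 k = 0 := rfl
  rw [e0]
  fin_cases k <;> norm_num

theorem ucbCount_pos {t : ℕ} (ht : 2 ≤ t) (k : Fin 2) : 1 ≤ ucbCount hK f x t k := by
  have h := ucbCount_mono (f := f) (x := x) hK ht k
  rw [ucbCount_two] at h
  omega

theorem pull_index_le {T : Fin 2 → ℕ} {t : ℕ} (ht : 2 < t) {k : Fin 2}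
    (hp : ucbArmAux hK f x T t = k) (j : Fin 2) :
    empMean (x j) (T j) + Real.sqrt (f j t / (T j : ℝ))
      ≤ empMean (x k) (T k) + Real.sqrt (f k t / (T k : ℝ)) := by
  rw [ucbArmAux, dif_neg (by omega)] at hp
  rw [← hp]
  exact argmaxFin_spec hK (fun j => empMean (x j) (T j) + Real.sqrt (f j t / (T j : ℝ))) j

/-- Bucketing lemma: a set of rounds `≥ 2` whose successors all satisfy a
downward-closed property `Q` is controlled by dyadic witnesses of `Q`. -/
theorem bucket_card_le (Q : ℕ → Prop) [DecidablePred Q] (L n : ℕ)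
    (hQmono : ∀ i j, 1 ≤ i → i ≤ j → Q j → Q i) (T : Finset ℕ)
    (hT2 : ∀ t ∈ T, 2 ≤ t) (hTQ : ∀ t ∈ T, Q (t + 1)) (hTn : T.card ≤ n)
    (hL : n < 2 ^ (L + 1)) :
    T.card ≤ ∑ j ∈ Finset.range (L + 1), 2 ^ (j + 1) * (if Q (2 ^ j + 2) then 1 else 0) := by
  rcases Nat.eq_zero_or_pos T.card with h0 | hpos
  · simp [h0]
  set m := T.card with hm
  have hTne : T.Nonempty := Finset.card_pos.1 hpos
  set js := Nat.log 2 m with hjs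
  have h1 : 2 ^ js ≤ m := Nat.pow_log_le_self 2 (by omega)
  have h2 : m < 2 ^ (js + 1) := Nat.lt_pow_succ_log_self (by norm_num) m
  have hjL : js < L + 1 := by
    have : (2:ℕ) ^ js < 2 ^ (L + 1) := by omega
    exact (Nat.pow_lt_pow_iff_right (by norm_num)).1 this
  have hmax : m + 1 ≤ T.max' hTne := by
    have hsub : T ⊆ Finset.Icc 2 (T.max' hTne) :=
      fun t ht => Finset.mem_Icc.2 ⟨hT2 t ht, Finset.le_max' T t ht⟩
    have hcard := Finset.card_le_card hsub
    rw [Nat.card_Icc] at hcard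
    have h2le := hT2 _ (T.max'_mem hTne)
    omega
  have hQmax : Q (T.max' hTne + 1) := hTQ _ (T.max'_mem hTne)
  have hQjs : Q (2 ^ js + 2) := hQmono _ _ (by omega) (by omega) hQmax
  calc m ≤ 2 ^ (js + 1) * (if Q (2 ^ js + 2) then 1 else 0) := by
        rw [if_pos hQjs]; omega
    _ ≤ _ := Finset.single_le_sum (f := fun j => 2 ^ (j + 1) * (if Q (2 ^ j + 2) then 1 else 0))
        (fun j _ => Nat.zero_le _) (Finset.mem_range.2 hjL)

end Counting

end Bandit
namespace Bandit

/-- Pointwise (per reward table) bound on the number of pulls of the suboptimal arm. -/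
theorem pointwise_count_le (ρ : ℝ) (hρ : 0 ≤ ρ) (x : Fin 2 → ℕ → ℝ) (hK : 0 < 2)
    (w bst : Fin 2) (μw μb Δ : ℝ) (hΔ : 0 < Δ) (hgap : μb = μw + Δ)
    (n u L : ℕ) (hu1 : 1 ≤ u)
    (hun : 16 * ρ * Real.log n ≤ (u : ℝ) * Δ ^ 2)
    (hL : n < 2 ^ (L + 1)) :
    ucbCount hK (rhoLog ρ) x n w ≤ u + 2
      + ((Finset.Icc u n).filter (fun s => μw + Δ / 4 ≤ empMean (x w) s)).card
      + ∑ s' ∈ Finset.Icc 1 n, ∑ j ∈ Finset.range (L + 1),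
          2 ^ (j + 1) * (if empMean (x bst) s'
            + Real.sqrt (ρ * Real.log (2 ^ j + 2 : ℕ) / s') ≤ μb - Δ / 2 then 1 else 0) := by
  classical
  set F := rhoLog (K := 2) ρ with hF
  set ca : ℕ → ℕ := fun t => ucbCount hK F x t w with hca
  set cb : ℕ → ℕ := fun t => ucbCount hK F x t bst with hcb
  set A : ℕ → Prop := fun s => μw + Δ / 4 ≤ empMean (x w) s with hA
  set Q : ℕ → ℕ → Prop := fun s' r =>
    empMean (x bst) s' + Real.sqrt (ρ * Real.log r / s') ≤ μb - Δ / 2 with hQ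
  set pull : ℕ → Prop := fun t => ucbArmAux hK F x (ucbCount hK F x t) (t + 1) = w with hpull
  set S : Finset ℕ := (Finset.range n).filter (fun t => pull t) with hS
  have hcount : ucbCount hK F x n w = S.card := ucbCount_eq_card hK n w
  set S1 : Finset ℕ := S.filter (fun t => t < 2) with hS1
  set S2 : Finset ℕ := S.filter (fun t => 2 ≤ t ∧ ca t < u) with hS2
  set S3 : Finset ℕ := S.filter (fun t => 2 ≤ t ∧ u ≤ ca t ∧ A (ca t)) with hS3
  set S4 : Finset ℕ := S.filter (fun t => 2 ≤ t ∧ u ≤ ca t ∧ ¬ A (ca t)) with hS4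
  have hsub : S ⊆ S1 ∪ S2 ∪ S3 ∪ S4 := by
    intro t ht
    simp only [hS1, hS2, hS3, hS4, Finset.mem_union, Finset.mem_filter]
    by_cases h2 : t < 2
    · exact Or.inl (Or.inl (Or.inl ⟨ht, h2⟩))
    · by_cases hu : ca t < u
      · exact Or.inl (Or.inl (Or.inr ⟨ht, by omega, hu⟩))
      · by_cases hAA : A (ca t)
        · exact Or.inl (Or.inr ⟨ht, by omega, by omega, hAA⟩)
        · exact Or.inr ⟨ht, by omega, by omega, hAA⟩
  have hcard : S.card ≤ S1.card + S2.card + S3.card + S4.card := by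
    calc S.card ≤ (S1 ∪ S2 ∪ S3 ∪ S4).card := Finset.card_le_card hsub
      _ ≤ (S1 ∪ S2 ∪ S3).card + S4.card := Finset.card_union_le _ _
      _ ≤ (S1 ∪ S2).card + S3.card + S4.card := by
          have := Finset.card_union_le (S1 ∪ S2) S3; omega
      _ ≤ S1.card + S2.card + S3.card + S4.card := by
          have := Finset.card_union_le S1 S2; omega
  -- injectivity of t ↦ ca t on pull times
  have hinj : ∀ t ∈ S, ∀ t' ∈ S, ca t = ca t' → t = t' := by
    intro t ht t' ht' he
    by_contra hne
    have hpt : pull t := (Finset.mem_filter.1 ht).2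
    have hpt' : pull t' := (Finset.mem_filter.1 ht').2
    rcases Nat.lt_or_ge t t' with h | h
    · have := ucbCount_lt_of_pull hK h w hpt
      simp only [hca] at he; omega
    · have h' : t' < t := by omega
      have := ucbCount_lt_of_pull hK h' w hpt'
      simp only [hca] at he; omega
  have h1 : S1.card ≤ 2 := by
    have : S1 ⊆ Finset.range 2 := by
      intro t ht
      exact Finset.mem_range.2 (Finset.mem_filter.1 ht).2
    calc S1.card ≤ (Finset.range 2).card := Finset.card_le_card this
      _ = 2 := Finset.card_range 2
  have h2 : S2.card ≤ u := by
    have hmaps : ∀ t ∈ S2, ca t ∈ Finset.range u := fun t ht =>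
      Finset.mem_range.2 (Finset.mem_filter.1 ht).2.2
    have hinj2 : Set.InjOn ca ↑S2 := fun t ht t' ht' he =>
      hinj t (Finset.filter_subset _ _ (Finset.mem_coe.1 ht)) t'
        (Finset.filter_subset _ _ (Finset.mem_coe.1 ht')) he
    have := Finset.card_le_card_of_injOn ca hmaps hinj2
    simpa using this
  have h3 : S3.card ≤ ((Finset.Icc u n).filter (fun s => μw + Δ / 4 ≤ empMean (x w) s)).card := by
    refine Finset.card_le_card_of_injOn ca ?_
      (fun t ht t' ht' he => hinj t (Finset.filter_subset _ _ (Finset.mem_coe.1 ht)) t'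
        (Finset.filter_subset _ _ (Finset.mem_coe.1 ht')) he)
    intro t ht
    obtain ⟨htS, _, hu', hAt⟩ := Finset.mem_filter.1 ht
    have htn : t < n := Finset.mem_range.1 (Finset.mem_filter.1 htS).1
    have hle : ca t ≤ t := ucbCount_le_self hK t w
    exact Finset.mem_filter.2 ⟨Finset.mem_Icc.2 ⟨hu', by omega⟩, hAt⟩
  -- key derivation on S4
  have hkey : ∀ t ∈ S4, 1 ≤ cb t ∧ cb t ≤ n ∧ Q (cb t) (t + 1) := by
    intro t ht
    obtain ⟨htS, ht2, hu', hAt⟩ := Finset.mem_filter.1 ht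
    have htn : t < n := Finset.mem_range.1 (Finset.mem_filter.1 htS).1
    have hpt : pull t := (Finset.mem_filter.1 htS).2
    have hcb1 : 1 ≤ cb t := ucbCount_pos hK ht2 bst
    have hcbn : cb t ≤ n := le_trans (ucbCount_le_self hK t bst) (by omega)
    refine ⟨hcb1, hcbn, ?_⟩
    have hidx := pull_index_le hK (show 2 < t + 1 by omega) hpt bst
    have hFj : ∀ j : Fin 2, F j (t + 1) = ρ * Real.log ((t + 1 : ℕ) : ℝ) := fun j => rfl
    rw [hFj, hFj] at hidx
    -- bound the exploration bonus of arm w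
    have hca1 : (0:ℝ) < ca t := by
      have : 1 ≤ ca t := le_trans hu1 hu'
      exact_mod_cast this
    have hu0 : (0:ℝ) < u := by exact_mod_cast hu1
    have hlogt : Real.log ((t + 1 : ℕ) : ℝ) ≤ Real.log n := by
      apply Real.log_le_log
      · have : (0:ℕ) < t + 1 := by omega
        exact_mod_cast this
      · exact_mod_cast htn
    have hlognn : 0 ≤ Real.log ((t + 1 : ℕ) : ℝ) := by
      apply Real.log_nonneg
      have : (1:ℕ) ≤ t + 1 := by omega
      exact_mod_cast this
    have hdivle : ρ * Real.log ((t + 1 : ℕ) : ℝ) / (ca t : ℝ) ≤ (Δ / 4) ^ 2 := by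
      have hnum : ρ * Real.log ((t + 1 : ℕ) : ℝ) ≤ ρ * Real.log n :=
        mul_le_mul_of_nonneg_left hlogt hρ
      have hnum0 : 0 ≤ ρ * Real.log ((t + 1 : ℕ) : ℝ) := mul_nonneg hρ hlognn
      have hd1 : ρ * Real.log ((t + 1 : ℕ) : ℝ) / (ca t : ℝ) ≤ ρ * Real.log ((t + 1 : ℕ) : ℝ) / (u : ℝ) :=
        div_le_div_of_nonneg_left hnum0 hu0 (by exact_mod_cast hu')
      have hd2 : ρ * Real.log ((t + 1 : ℕ) : ℝ) / (u : ℝ) ≤ ρ * Real.log n / (u : ℝ) :=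
        (div_le_div_iff_of_pos_right hu0).2 hnum
      have hd3 : ρ * Real.log n / (u : ℝ) ≤ Δ ^ 2 / 16 := by
        rw [div_le_div_iff₀ hu0 (by norm_num)]
        nlinarith [hun]
      calc ρ * Real.log ((t + 1 : ℕ) : ℝ) / (ca t : ℝ)
          ≤ ρ * Real.log ((t + 1 : ℕ) : ℝ) / (u : ℝ) := hd1
        _ ≤ ρ * Real.log n / (u : ℝ) := hd2
        _ ≤ Δ ^ 2 / 16 := hd3
        _ = (Δ / 4) ^ 2 := by ring
    have hsq : Real.sqrt (ρ * Real.log ((t + 1 : ℕ) : ℝ) / (ca t : ℝ)) ≤ Δ / 4 := by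
      have := Real.sqrt_le_sqrt hdivle
      rwa [Real.sqrt_sq (by positivity)] at this
    have hAlt : empMean (x w) (ca t) < μw + Δ / 4 := not_le.1 hAt
    show empMean (x bst) (cb t) + Real.sqrt (ρ * Real.log ((t + 1 : ℕ) : ℝ) / (cb t : ℝ)) ≤ μb - Δ / 2
    calc empMean (x bst) (cb t) + Real.sqrt (ρ * Real.log ((t + 1 : ℕ) : ℝ) / (cb t : ℝ))
        ≤ empMean (x w) (ca t) + Real.sqrt (ρ * Real.log ((t + 1 : ℕ) : ℝ) / (ca t : ℝ)) := hidx
      _ ≤ μw + Δ / 4 + Δ / 4 := by linarith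
      _ ≤ μb - Δ / 2 := by rw [hgap]; linarith
  have h4 : S4.card ≤ ∑ s' ∈ Finset.Icc 1 n, ∑ j ∈ Finset.range (L + 1),
      2 ^ (j + 1) * (if Q s' (2 ^ j + 2) then 1 else 0) := by
    have hfib : S4.card = ∑ s' ∈ Finset.Icc 1 n, (S4.filter (fun t => cb t = s')).card :=
      Finset.card_eq_sum_card_fiberwise (fun t ht =>
        Finset.mem_Icc.2 ⟨(hkey t ht).1, (hkey t ht).2.1⟩)
    rw [hfib]
    refine Finset.sum_le_sum fun s' hs' => ?_
    have hs'1 : 1 ≤ s' := (Finset.mem_Icc.1 hs').1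
    refine bucket_card_le (Q s') L n ?_ _ ?_ ?_ ?_ hL
    · -- monotonicity of Q s' in the round
      intro i j hi hij hQj
      have hlog : Real.log (i : ℕ) ≤ Real.log (j : ℕ) := by
        apply Real.log_le_log
        · have : (1:ℝ) ≤ (i:ℝ) := by exact_mod_cast hi
          linarith
        · exact_mod_cast hij
      have hspos : (0:ℝ) < (s' : ℝ) := by exact_mod_cast hs'1
      have : Real.sqrt (ρ * Real.log (i : ℕ) / s') ≤ Real.sqrt (ρ * Real.log (j : ℕ) / s') := by
        apply Real.sqrt_le_sqrt
        exact (div_le_div_iff_of_pos_right hspos).2 (mul_le_mul_of_nonneg_left hlog hρ)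
      simp only [hQ] at hQj ⊢
      linarith
    · intro t ht
      exact (Finset.mem_filter.1 (Finset.mem_filter.1 ht).1).2.1
    · intro t ht
      have hmem := Finset.mem_filter.1 ht
      have := (hkey t hmem.1).2.2
      rwa [hmem.2] at this
    · calc (S4.filter (fun t => cb t = s')).card ≤ S4.card :=
            Finset.card_le_card (Finset.filter_subset _ _)
        _ ≤ S.card := Finset.card_le_card (Finset.filter_subset _ _)
        _ ≤ n := by
            rw [hS]
            calc ((Finset.range n).filter _).card ≤ (Finset.range n).card :=
                Finset.card_le_card (Finset.filter_subset _ _)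
              _ = n := Finset.card_range n
  rw [hcount]
  simp only [hQ] at h4
  omega

end Bandit
namespace Bandit

section Expectation

variable {Ω : Type} [MeasurableSpace Ω] {P : Measure Ω} [IsProbabilityMeasure P]
  {θ : Fin 2 → Measure ℝ} {X : Fin 2 → ℕ → Ω → ℝ}

theorem integral_eq_mean (hX : IsRewardTable P θ X) (k : Fin 2) (u : ℕ) :
    ∫ ω, X k u ω ∂P = mean (θ k) := by
  rw [mean, ← hX.2.2.1 k u]
  exact (integral_map (hX.1 k u).aemeasurable
    (f := fun y => y) aestronglyMeasurable_id).symm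

theorem measurable_empMean (hX : IsRewardTable P θ X) (k : Fin 2) (s : ℕ) :
    Measurable (fun ω => empMean (fun u' => X k u' ω) s) := by
  have : (fun ω => empMean (fun u' => X k u' ω) s)
      = fun ω => (∑ u' ∈ Finset.range s, X k u' ω) / (s : ℝ) := rfl
  rw [this]
  exact (Finset.measurable_sum (Finset.range s) fun i _ => hX.1 k i).div_const _

/-- Upper-deviation bound for the empirical mean of an arm. -/
theorem devA (hX : IsRewardTable P θ X) (w : Fin 2) {ε : ℝ} (hε : 0 ≤ ε) {s : ℕ}
    (hs : 1 ≤ s) :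
    (P {ω | mean (θ w) + ε ≤ empMean (fun u' => X w u' ω) s}).toReal
      ≤ Real.exp (-2 * s * ε ^ 2) := by
  have hb : ∀ (p : Fin 2 × ℕ) ω, X p.1 p.2 ω ∈ Set.Icc (0:ℝ) (0 + 1) := by
    intro p ω
    have := hX.2.1 p.1 p.2 ω
    norm_num at this ⊢
    exact this
  have key := hoeffding_inequality hX.2.2.2 (fun p => hX.1 p.1 p.2) hb
    ({w} ×ˢ Finset.range s) hε
  have hcard : ({w} ×ˢ Finset.range s).card = s := by simp
  have hsum : ∀ ω, (∑ p ∈ {w} ×ˢ Finset.range s, X p.1 p.2 ω)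
      = ∑ u' ∈ Finset.range s, X w u' ω := by
    intro ω; rw [Finset.sum_product]; simp
  have hM : (∑ p ∈ {w} ×ˢ Finset.range s, ∫ ω', X p.1 p.2 ω' ∂P)
      = s * mean (θ w) := by
    rw [Finset.sum_product]
    simp [integral_eq_mean hX, mul_comm]
  rw [hcard] at key
  refine le_trans ?_ key
  apply ENNReal.toReal_mono (measure_ne_top P _)
  apply measure_mono
  intro ω hω
  simp only [Set.mem_setOf_eq] at hω ⊢
  rw [hsum, hM]
  have hs0 : (0:ℝ) < (s:ℝ) := by exact_mod_cast hs
  have h2 : (mean (θ w) + ε) * s ≤ ∑ u' ∈ Finset.range s, X w u' ω := by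
    rw [← le_div_iff₀ hs0]
    exact hω
  nlinarith [h2]

/-- Lower-deviation bound for the empirical mean of an arm. -/
theorem devB (hX : IsRewardTable P θ X) (b : Fin 2) {ε : ℝ} (hε : 0 ≤ ε) {s : ℕ}
    (hs : 1 ≤ s) :
    (P {ω | empMean (fun u' => X b u' ω) s ≤ mean (θ b) - ε}).toReal
      ≤ Real.exp (-2 * s * ε ^ 2) := by
  have hind : iIndepFun
      (fun (p : Fin 2 × ℕ) ω => -X p.1 p.2 ω) P := by
    have := hX.2.2.2.comp (fun _ => fun y : ℝ => -y) (fun _ => measurable_neg)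
    exact this
  have hb : ∀ (p : Fin 2 × ℕ) ω, -X p.1 p.2 ω ∈ Set.Icc (-1:ℝ) (-1 + 1) := by
    intro p ω
    obtain ⟨h1, h2⟩ := hX.2.1 p.1 p.2 ω
    constructor <;> simp <;> linarith
  have key := hoeffding_inequality hind (fun p => (hX.1 p.1 p.2).neg) hb
    ({b} ×ˢ Finset.range s) hε
  have hcard : ({b} ×ˢ Finset.range s).card = s := by simp
  have hsum : ∀ ω, (∑ p ∈ {b} ×ˢ Finset.range s, -X p.1 p.2 ω)
      = -∑ u' ∈ Finset.range s, X b u' ω := by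
    intro ω; rw [Finset.sum_product]; simp
  have hM : (∑ p ∈ {b} ×ˢ Finset.range s, ∫ ω', -X p.1 p.2 ω' ∂P)
      = -(s * mean (θ b)) := by
    rw [Finset.sum_product]
    have : ∀ u' : ℕ, ∫ ω', -X b u' ω' ∂P = -mean (θ b) := by
      intro u'
      rw [integral_neg, integral_eq_mean hX]
    simp [this, mul_comm]
  rw [hcard] at key
  refine le_trans ?_ key
  apply ENNReal.toReal_mono (measure_ne_top P _)
  apply measure_mono
  intro ω hω
  simp only [Set.mem_setOf_eq] at hω ⊢
  rw [hsum, hM]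
  have hs0 : (0:ℝ) < (s:ℝ) := by exact_mod_cast hs
  have h2 : (∑ u' ∈ Finset.range s, X b u' ω) ≤ (mean (θ b) - ε) * s := by
    rw [← div_le_iff₀ hs0]
    exact hω
  nlinarith [h2]

/-- Expected-count bound for the generalized UCB policy. -/
theorem expCount_le (hK : 0 < 2) (hX : IsRewardTable P θ X) {ρ : ℝ} (hρ : 0 ≤ ρ)
    (w bst : Fin 2) {Δ : ℝ} (hΔ : 0 < Δ)
    (hgap : mean (θ bst) = mean (θ w) + Δ)
    (n u L : ℕ) (hu1 : 1 ≤ u)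
    (hun : 16 * ρ * Real.log n ≤ (u : ℝ) * Δ ^ 2) (hL : n < 2 ^ (L + 1)) :
    ucbExpCount hK (rhoLog ρ) P X n w ≤ ((u : ℝ) + 2)
      + (∑ s ∈ Finset.Icc u n, Real.exp (-2 * s * (Δ / 4) ^ 2))
      + ∑ s' ∈ Finset.Icc 1 n, ∑ j ∈ Finset.range (L + 1), (2:ℝ) ^ (j + 1) *
          Real.exp (-2 * s' * (Δ / 2
            + Real.sqrt (ρ * Real.log ((2 ^ j + 2 : ℕ)) / s')) ^ 2) := by
  classical
  set μw := mean (θ w) with hμw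
  set μb := mean (θ bst) with hμb
  set SA : ℕ → Set Ω := fun s =>
    {ω | μw + Δ / 4 ≤ empMean (fun u' => X w u' ω) s} with hSA
  set SB : ℕ → ℕ → Set Ω := fun s' j =>
    {ω | empMean (fun u' => X bst u' ω) s'
      + Real.sqrt (ρ * Real.log ((2 ^ j + 2 : ℕ)) / s') ≤ μb - Δ / 2} with hSB
  have hSAm : ∀ s, MeasurableSet (SA s) := fun s =>
    measurableSet_le measurable_const (measurable_empMean hX w s)
  have hSBm : ∀ s' j, MeasurableSet (SB s' j) := fun s' j =>
    measurableSet_le ((measurable_empMean hX bst s').add_const _) measurable_const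
  set G : Ω → ℝ := fun ω => ((u : ℝ) + 2)
    + (∑ s ∈ Finset.Icc u n, (SA s).indicator (fun _ => (1:ℝ)) ω)
    + ∑ s' ∈ Finset.Icc 1 n, ∑ j ∈ Finset.range (L + 1),
        (2:ℝ) ^ (j + 1) * (SB s' j).indicator (fun _ => (1:ℝ)) ω with hG
  -- pointwise bound
  have hpoint : ∀ ω, (ucbCount hK (rhoLog ρ) (fun j u' => X j u' ω) n w : ℝ) ≤ G ω := by
    intro ω
    have hcount := pointwise_count_le ρ hρ (fun j u' => X j u' ω) hK w bst μw μb Δ hΔ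
      hgap n u L hu1 hun hL
    have hcast : ((ucbCount hK (rhoLog ρ) (fun j u' => X j u' ω) n w : ℕ) : ℝ)
        ≤ ((u + 2
          + ((Finset.Icc u n).filter
              (fun s => μw + Δ / 4 ≤ empMean (fun u' => X w u' ω) s)).card
          + ∑ s' ∈ Finset.Icc 1 n, ∑ j ∈ Finset.range (L + 1),
              2 ^ (j + 1) * (if empMean (fun u' => X bst u' ω) s'
                + Real.sqrt (ρ * Real.log ((2 ^ j + 2 : ℕ)) / s') ≤ μb - Δ / 2
                then 1 else 0) : ℕ) : ℝ) := by
      exact_mod_cast hcount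
    refine hcast.trans_eq ?_
    have hAind : ∀ s, (if μw + Δ / 4 ≤ empMean (fun u' => X w u' ω) s then (1:ℝ) else 0)
        = (SA s).indicator (fun _ => (1:ℝ)) ω := fun s => by
      rw [Set.indicator_apply]; simp only [hSA, Set.mem_setOf_eq]
    have hBind : ∀ s' j, (if empMean (fun u' => X bst u' ω) s'
          + Real.sqrt (ρ * Real.log ((2 ^ j + 2 : ℕ)) / s') ≤ μb - Δ / 2 then (1:ℝ) else 0)
        = (SB s' j).indicator (fun _ => (1:ℝ)) ω := fun s' j => by
      rw [Set.indicator_apply]; simp only [hSB, Set.mem_setOf_eq]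
    rw [hG]
    push_cast [Finset.card_filter]
    push_cast at hBind
    simp only [hAind, hBind]
  -- integrability of G
  have hIA : ∀ s, Integrable ((SA s).indicator (fun _ => (1:ℝ))) P := fun s =>
    (integrable_const (1:ℝ)).indicator (hSAm s)
  have hIB : ∀ s' j, Integrable ((SB s' j).indicator (fun _ => (1:ℝ))) P := fun s' j =>
    (integrable_const (1:ℝ)).indicator (hSBm s' j)
  have hGint : Integrable G P := by
    rw [hG]
    apply Integrable.add
    apply Integrable.add
    · exact integrable_const _
    · exact integrable_finset_sum _ fun s _ => hIA s
    · exact integrable_finset_sum _ fun s' _ =>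
        integrable_finset_sum _ fun j _ => (hIB s' j).const_mul _
  -- E[count] ≤ E[G]
  have hEG : ucbExpCount hK (rhoLog ρ) P X n w ≤ ∫ ω, G ω ∂P := by
    rw [ucbExpCount]
    refine integral_mono_of_nonneg ?_ hGint ?_
    · filter_upwards with ω using by positivity
    · filter_upwards with ω using hpoint ω
  refine hEG.trans ?_
  -- compute E[G]
  have hintA : ∀ s, ∫ ω, (SA s).indicator (fun _ => (1:ℝ)) ω ∂P = (P (SA s)).toReal := by
    intro s
    rw [integral_indicator_const (1:ℝ) (hSAm s)]
    simp
    rfl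
  have hintB : ∀ s' j, ∫ ω, (SB s' j).indicator (fun _ => (1:ℝ)) ω ∂P
      = (P (SB s' j)).toReal := by
    intro s' j
    rw [integral_indicator_const (1:ℝ) (hSBm s' j)]
    simp
    rfl
  have e1 : ∫ ω, (∑ s ∈ Finset.Icc u n, (SA s).indicator (fun _ => (1:ℝ)) ω) ∂P
      = ∑ s ∈ Finset.Icc u n, (P (SA s)).toReal := by
    rw [integral_finset_sum _ fun s _ => hIA s]
    exact Finset.sum_congr rfl fun s _ => hintA s
  have e2 : ∫ ω, (∑ s' ∈ Finset.Icc 1 n, ∑ j ∈ Finset.range (L + 1),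
        (2:ℝ) ^ (j + 1) * (SB s' j).indicator (fun _ => (1:ℝ)) ω) ∂P
      = ∑ s' ∈ Finset.Icc 1 n, ∑ j ∈ Finset.range (L + 1),
        (2:ℝ) ^ (j + 1) * (P (SB s' j)).toReal := by
    rw [integral_finset_sum _ (fun s' _ =>
      integrable_finset_sum _ fun j _ => (hIB s' j).const_mul _)]
    refine Finset.sum_congr rfl fun s' _ => ?_
    rw [integral_finset_sum _ fun j _ => (hIB s' j).const_mul _]
    refine Finset.sum_congr rfl fun j _ => ?_
    rw [MeasureTheory.integral_const_mul, hintB]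
  have hEGeq : ∫ ω, G ω ∂P = ((u : ℝ) + 2)
      + (∑ s ∈ Finset.Icc u n, (P (SA s)).toReal)
      + ∑ s' ∈ Finset.Icc 1 n, ∑ j ∈ Finset.range (L + 1),
          (2:ℝ) ^ (j + 1) * (P (SB s' j)).toReal := by
    have int1 : Integrable (fun ω => ((u : ℝ) + 2)
        + ∑ s ∈ Finset.Icc u n, (SA s).indicator (fun _ => (1:ℝ)) ω) P :=
      (integrable_const _).add (integrable_finset_sum _ fun s _ => hIA s)
    have int2 : Integrable (fun ω => ∑ s' ∈ Finset.Icc 1 n, ∑ j ∈ Finset.range (L + 1),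
        (2:ℝ) ^ (j + 1) * (SB s' j).indicator (fun _ => (1:ℝ)) ω) P :=
      integrable_finset_sum _ fun s' _ =>
        integrable_finset_sum _ fun j _ => (hIB s' j).const_mul _
    rw [hG]
    rw [integral_add int1 int2,
      integral_add (integrable_const _) (integrable_finset_sum _ fun s _ => hIA s),
      integral_const, e1, e2]
    simp
  rw [hEGeq]
  -- bound each probability
  have hbA : ∀ s ∈ Finset.Icc u n, (P (SA s)).toReal ≤ Real.exp (-2 * s * (Δ / 4) ^ 2) := by
    intro s hs
    have hs1 : 1 ≤ s := le_trans hu1 (Finset.mem_Icc.1 hs).1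
    exact devA hX w (by positivity) hs1
  have hbB : ∀ s' ∈ Finset.Icc 1 n, ∀ j, (P (SB s' j)).toReal
      ≤ Real.exp (-2 * s' * (Δ / 2 + Real.sqrt (ρ * Real.log ((2 ^ j + 2 : ℕ)) / s')) ^ 2) := by
    intro s' hs' j
    have hs1 : 1 ≤ s' := (Finset.mem_Icc.1 hs').1
    set r := Real.sqrt (ρ * Real.log ((2 ^ j + 2 : ℕ)) / s') with hr
    have hr0 : 0 ≤ r := Real.sqrt_nonneg _
    have hseteq : SB s' j = {ω | empMean (fun u' => X bst u' ω) s' ≤ μb - (Δ / 2 + r)} := by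
      rw [hSB]
      ext ω
      simp only [Set.mem_setOf_eq]
      constructor <;> intro h <;> linarith
    rw [hseteq]
    exact devB hX bst (by positivity) hs1
  refine add_le_add (add_le_add le_rfl ?_) ?_
  · exact Finset.sum_le_sum hbA
  · refine Finset.sum_le_sum fun s' hs' => Finset.sum_le_sum fun j _ => ?_
    exact mul_le_mul_of_nonneg_left (hbB s' hs' j) (by positivity)

end Expectation

end Bandit
namespace Bandit

theorem geom_tail_le {r : ℝ} (h0 : 0 ≤ r) (h1 : r < 1) (S : Finset ℕ) :
    ∑ s ∈ S, r ^ s ≤ (1 - r)⁻¹ := by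
  refine ((summable_geometric_of_lt_one h0 h1).sum_le_tsum S
    (fun i _ => by positivity)).trans_eq ?_
  exact tsum_geometric_of_lt_one h0 h1

theorem sumA_le {Δ : ℝ} (hΔ : 0 < Δ) (u n : ℕ) :
    ∑ s ∈ Finset.Icc u n, Real.exp (-2 * s * (Δ / 4) ^ 2)
      ≤ (1 - Real.exp (-(Δ ^ 2 / 8)))⁻¹ := by
  have hterm : ∀ s : ℕ, Real.exp (-2 * s * (Δ / 4) ^ 2)
      = (Real.exp (-(Δ ^ 2 / 8))) ^ s := by
    intro s
    rw [← Real.exp_nat_mul]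
    congr 1
    ring
  rw [Finset.sum_congr rfl fun s _ => hterm s]
  exact geom_tail_le (Real.exp_nonneg _) (Real.exp_lt_one_iff.2 (neg_lt_zero.2 (by positivity))) _

theorem sumB_le {Δ ρ α : ℝ} (hΔ : 0 < Δ) (hρ : 0 ≤ ρ) (hα : α = 1 - 2 * ρ)
    (hα0 : 0 ≤ α) {n : ℕ} (hn : 1 ≤ n) {L : ℕ} (h2L : (2:ℝ) ^ L ≤ 2 * n) :
    ∑ s' ∈ Finset.Icc 1 n, ∑ j ∈ Finset.range (L + 1), (2:ℝ) ^ (j + 1) *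
        Real.exp (-2 * s' * (Δ / 2 + Real.sqrt (ρ * Real.log ((2 ^ j + 2 : ℕ)) / s')) ^ 2)
      ≤ (1 - Real.exp (-(Δ ^ 2 / 2)))⁻¹ * (2 * (L + 1) * (2 * n) ^ α) := by
  set q : ℝ := 2 * Real.exp (-2 * ρ * Real.log 2) with hq
  have hq1 : 1 ≤ q := by
    have : q = Real.exp (α * Real.log 2) := by
      rw [hq, hα]
      rw [show (1 - 2 * ρ) * Real.log 2 = Real.log 2 + (-2 * ρ * Real.log 2) by ring,
        Real.exp_add, Real.exp_log (by norm_num)]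
    rw [this]
    apply Real.one_le_exp
    have := Real.log_pos (by norm_num : (1:ℝ) < 2)
    positivity
  have hqL : q ^ L ≤ (2 * n) ^ α := by
    have hqe : q = Real.exp (α * Real.log 2) := by
      rw [hq, hα]
      rw [show (1 - 2 * ρ) * Real.log 2 = Real.log 2 + (-2 * ρ * Real.log 2) by ring,
        Real.exp_add, Real.exp_log (by norm_num)]
    have h2n0 : (0:ℝ) < 2 * n := by
      have : (1:ℝ) ≤ (n:ℝ) := by exact_mod_cast hn
      linarith
    rw [hqe, ← Real.exp_nat_mul, Real.rpow_def_of_pos h2n0]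
    apply Real.exp_le_exp.2
    have hlog2L : Real.log ((2:ℝ) ^ L) = (L : ℝ) * Real.log 2 := by
      rw [Real.log_pow]
    have hlogle : Real.log ((2:ℝ) ^ L) ≤ Real.log (2 * n) :=
      Real.log_le_log (by positivity) h2L
    calc (L:ℝ) * (α * Real.log 2) = α * ((L:ℝ) * Real.log 2) := by ring
      _ = α * Real.log ((2:ℝ) ^ L) := by rw [hlog2L]
      _ ≤ α * Real.log (2 * n) := mul_le_mul_of_nonneg_left hlogle hα0
      _ = Real.log (2 * n) * α := by ring
  -- per (s', j) bound
  have hterm : ∀ s' ∈ Finset.Icc 1 n, ∀ j ∈ Finset.range (L + 1),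
      (2:ℝ) ^ (j + 1) * Real.exp (-2 * s' *
          (Δ / 2 + Real.sqrt (ρ * Real.log ((2 ^ j + 2 : ℕ)) / s')) ^ 2)
        ≤ (Real.exp (-(Δ ^ 2 / 2))) ^ (s' : ℕ) * (2 * q ^ L) := by
    intro s' hs' j hj
    have hs'1 : 1 ≤ s' := (Finset.mem_Icc.1 hs').1
    have hs'0 : (0:ℝ) < (s' : ℝ) := by exact_mod_cast hs'1
    have hlognn : 0 ≤ Real.log ((2 ^ j + 2 : ℕ) : ℝ) := by
      apply Real.log_nonneg
      have : (1:ℕ) ≤ 2 ^ j + 2 := le_trans (by norm_num) (Nat.le_add_left 2 (2 ^ j))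
      exact_mod_cast this
    set r : ℝ := Real.sqrt (ρ * Real.log ((2 ^ j + 2 : ℕ)) / s') with hr
    have hr0 : 0 ≤ r := Real.sqrt_nonneg _
    have hr2 : r ^ 2 = ρ * Real.log ((2 ^ j + 2 : ℕ)) / s' := by
      rw [hr, Real.sq_sqrt (by positivity)]
    have hexp1 : Real.exp (-2 * s' * (Δ / 2 + r) ^ 2)
        ≤ Real.exp (-(Δ ^ 2 / 2) * s') * Real.exp (-2 * ρ * Real.log ((2 ^ j + 2 : ℕ))) := by
      rw [← Real.exp_add]
      apply Real.exp_le_exp.2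
      have hcancel : (s' : ℝ) * (ρ * Real.log ((2 ^ j + 2 : ℕ)) / s')
          = ρ * Real.log ((2 ^ j + 2 : ℕ)) := by
        field_simp
      nlinarith [mul_nonneg (mul_nonneg (le_of_lt hs'0) hΔ.le) hr0, sq_nonneg (Δ/2 + r),
        mul_nonneg hs'0.le (sq_nonneg r), hr2]
    have hexp2 : Real.exp (-2 * ρ * Real.log ((2 ^ j + 2 : ℕ)))
        ≤ Real.exp (-2 * ρ * ((j : ℝ) * Real.log 2)) := by
      apply Real.exp_le_exp.2
      have hlogj : Real.log ((2:ℝ) ^ j) = (j : ℝ) * Real.log 2 := by rw [Real.log_pow]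
      have hmono : Real.log ((2:ℝ) ^ j) ≤ Real.log ((2 ^ j + 2 : ℕ) : ℝ) := by
        apply Real.log_le_log (by positivity)
        push_cast
        norm_num
      nlinarith [mul_le_mul_of_nonneg_left hmono hρ, hlogj]
    have hcomb : (2:ℝ) ^ (j + 1) * Real.exp (-2 * ρ * ((j:ℝ) * Real.log 2)) = 2 * q ^ j := by
      rw [hq, mul_pow, ← Real.exp_nat_mul]
      rw [pow_succ]
      ring_nf
    have hjL2 : j ≤ L := by
      have := Finset.mem_range.1 hj
      omega
    have hqj : q ^ j ≤ q ^ L := pow_le_pow_right₀ hq1 hjL2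
    calc (2:ℝ) ^ (j + 1) * Real.exp (-2 * s' * (Δ / 2 + r) ^ 2)
        ≤ (2:ℝ) ^ (j + 1) * (Real.exp (-(Δ ^ 2 / 2) * s')
            * Real.exp (-2 * ρ * Real.log ((2 ^ j + 2 : ℕ)))) :=
          mul_le_mul_of_nonneg_left hexp1 (by positivity)
      _ ≤ (2:ℝ) ^ (j + 1) * (Real.exp (-(Δ ^ 2 / 2) * s')
            * Real.exp (-2 * ρ * ((j:ℝ) * Real.log 2))) := by
          apply mul_le_mul_of_nonneg_left _ (by positivity)
          exact mul_le_mul_of_nonneg_left hexp2 (Real.exp_pos _).le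
      _ = Real.exp (-(Δ ^ 2 / 2) * s') * ((2:ℝ) ^ (j + 1)
            * Real.exp (-2 * ρ * ((j:ℝ) * Real.log 2))) := by ring
      _ = Real.exp (-(Δ ^ 2 / 2) * s') * (2 * q ^ j) := by rw [hcomb]
      _ ≤ Real.exp (-(Δ ^ 2 / 2) * s') * (2 * q ^ L) := by
          apply mul_le_mul_of_nonneg_left _ (Real.exp_pos _).le
          linarith
      _ = (Real.exp (-(Δ ^ 2 / 2))) ^ (s' : ℕ) * (2 * q ^ L) := by
          rw [← Real.exp_nat_mul]
          ring_nf
  calc ∑ s' ∈ Finset.Icc 1 n, ∑ j ∈ Finset.range (L + 1), (2:ℝ) ^ (j + 1) *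
        Real.exp (-2 * s' * (Δ / 2 + Real.sqrt (ρ * Real.log ((2 ^ j + 2 : ℕ)) / s')) ^ 2)
      ≤ ∑ s' ∈ Finset.Icc 1 n, ∑ _j ∈ Finset.range (L + 1),
          (Real.exp (-(Δ ^ 2 / 2))) ^ (s' : ℕ) * (2 * q ^ L) := by
        refine Finset.sum_le_sum fun s' hs' => Finset.sum_le_sum fun j hj => ?_
        exact hterm s' hs' j hj
    _ = ∑ s' ∈ Finset.Icc 1 n,
          (Real.exp (-(Δ ^ 2 / 2))) ^ (s' : ℕ) * ((L + 1) * (2 * q ^ L)) := by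
        refine Finset.sum_congr rfl fun s' _ => ?_
        rw [Finset.sum_const, Finset.card_range, nsmul_eq_mul]
        push_cast
        ring
    _ = (∑ s' ∈ Finset.Icc 1 n, (Real.exp (-(Δ ^ 2 / 2))) ^ (s' : ℕ))
          * ((L + 1) * (2 * q ^ L)) := by rw [← Finset.sum_mul]
    _ ≤ (1 - Real.exp (-(Δ ^ 2 / 2)))⁻¹ * ((L + 1) * (2 * q ^ L)) := by
        apply mul_le_mul_of_nonneg_right
          (geom_tail_le (Real.exp_nonneg _) (Real.exp_lt_one_iff.2 (neg_lt_zero.2 (by positivity))) _)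
        have hqL0 : (0:ℝ) ≤ q ^ L := by positivity
        positivity
    _ ≤ (1 - Real.exp (-(Δ ^ 2 / 2)))⁻¹ * (2 * (L + 1) * (2 * n) ^ α) := by
        apply mul_le_mul_of_nonneg_left
        · have hL0 : (0:ℝ) ≤ (L:ℝ) + 1 := by positivity
          calc ((L:ℝ) + 1) * (2 * q ^ L) = 2 * (L + 1) * q ^ L := by ring
            _ ≤ 2 * (L + 1) * (2 * n) ^ α :=
              mul_le_mul_of_nonneg_left hqL (by positivity)
        · have h1 : Real.exp (-(Δ ^ 2 / 2)) < 1 := Real.exp_lt_one_iff.2 (neg_lt_zero.2 (by positivity))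
          have h2 : 0 < 1 - Real.exp (-(Δ ^ 2 / 2)) := by linarith
          positivity

theorem littleo_helper {α e : ℝ} (hα0 : 0 ≤ α) (he : α < e) :
    (fun n : ℕ => (1 + Real.log n) * (1 + (n:ℝ) ^ α)) =o[atTop]
      fun n : ℕ => (n:ℝ) ^ e := by
  have he0 : 0 < e := lt_of_le_of_lt hα0 he
  have hd : 0 < e - α := by linarith
  have hreal : (fun x : ℝ => (1 + Real.log x) * (1 + x ^ α)) =o[atTop]
      fun x : ℝ => x ^ e := by
    have h1 : (fun _ : ℝ => (1:ℝ)) =o[atTop] fun x : ℝ => x ^ e := by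
      rw [Asymptotics.isLittleO_const_left]
      right
      have := tendsto_rpow_atTop he0
      refine Filter.Tendsto.comp tendsto_norm_atTop_atTop this
    have h2 : Real.log =o[atTop] fun x : ℝ => x ^ e := isLittleO_log_rpow_atTop he0
    have h2' : Real.log =o[atTop] fun x : ℝ => x ^ (e - α) :=
      isLittleO_log_rpow_atTop hd
    have h1' : (fun _ : ℝ => (1:ℝ)) =o[atTop] fun x : ℝ => x ^ (e - α) := by
      rw [Asymptotics.isLittleO_const_left]
      right
      exact Filter.Tendsto.comp tendsto_norm_atTop_atTop (tendsto_rpow_atTop hd)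
    have heq : (fun x : ℝ => x ^ (e - α) * x ^ α) =ᶠ[atTop] fun x : ℝ => x ^ e := by
      filter_upwards [eventually_gt_atTop (0:ℝ)] with x hx
      rw [← Real.rpow_add hx]
      norm_num
    have h3 : (fun x : ℝ => x ^ α) =o[atTop] fun x : ℝ => x ^ e := by
      have := (h1'.mul_isBigO (Asymptotics.isBigO_refl (fun x : ℝ => x ^ α) atTop))
      simp only [one_mul] at this
      exact this.congr' (Filter.EventuallyEq.refl _ _) heq
    have h4 : (fun x : ℝ => Real.log x * x ^ α) =o[atTop] fun x : ℝ => x ^ e := by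
      have := (h2'.mul_isBigO (Asymptotics.isBigO_refl (fun x : ℝ => x ^ α) atTop))
      exact this.congr' (Filter.EventuallyEq.refl _ _) heq
    have hsum := ((h1.add h3).add (h2.add h4))
    refine hsum.congr' ?_ (Filter.EventuallyEq.refl _ _)
    filter_upwards with x
    ring
  have := hreal.comp_tendsto tendsto_natCast_atTop_atTop
  exact this

end Bandit
namespace Bandit

set_option maxHeartbeats 1000000 in
theorem regret_term_littleo (hK : 0 < 2) {Ω : Type} [MeasurableSpace Ω] {P : Measure Ω}
    [IsProbabilityMeasure P] {θ : Fin 2 → Measure ℝ} {X : Fin 2 → ℕ → Ω → ℝ}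
    (hX : IsRewardTable P θ X) {ρ α : ℝ} (hρpos : 0 < ρ) (hα : α = 1 - 2 * ρ)
    (hα0 : 0 ≤ α) (w bst : Fin 2) (hlt : mean (θ w) < mean (θ bst)) {e : ℝ} (he : α < e) :
    (fun n : ℕ => (mean (θ bst) - mean (θ w)) * ucbExpCount hK (rhoLog ρ) P X n w)
      =o[atTop] fun n : ℕ => (n:ℝ) ^ e := by
  set Δ : ℝ := mean (θ bst) - mean (θ w) with hΔdef
  have hΔ : 0 < Δ := by rw [hΔdef]; linarith
  have hgap : mean (θ bst) = mean (θ w) + Δ := by rw [hΔdef]; ring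
  set C1 : ℝ := (1 - Real.exp (-(Δ ^ 2 / 8)))⁻¹ with hC1
  set C2 : ℝ := (1 - Real.exp (-(Δ ^ 2 / 2)))⁻¹ with hC2
  have hC1p : 0 ≤ C1 := by
    rw [hC1]
    have : Real.exp (-(Δ ^ 2 / 8)) < 1 := Real.exp_lt_one_iff.2 (neg_lt_zero.2 (by positivity))
    have : 0 < 1 - Real.exp (-(Δ ^ 2 / 8)) := by linarith
    positivity
  have hC2p : 0 ≤ C2 := by
    rw [hC2]
    have : Real.exp (-(Δ ^ 2 / 2)) < 1 := Real.exp_lt_one_iff.2 (neg_lt_zero.2 (by positivity))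
    have : 0 < 1 - Real.exp (-(Δ ^ 2 / 2)) := by linarith
    positivity
  set uf : ℕ → ℕ := fun n => ⌈16 * ρ * Real.log n / Δ ^ 2⌉₊ + 1 with huf
  set Lf : ℕ → ℕ := fun n => Nat.log 2 n + 1 with hLf
  have hlog2pos : 0 < Real.log 2 := Real.log_pos (by norm_num)
  -- the main expected-count bound, for n ≥ 1
  have hmain : ∀ n : ℕ, 1 ≤ n → ucbExpCount hK (rhoLog ρ) P X n w
      ≤ ((uf n : ℝ) + 2) + C1 + C2 * (2 * (Lf n + 1) * (2 * n) ^ α) := by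
    intro n hn
    have hlogn : 0 ≤ Real.log n := Real.log_nonneg (by exact_mod_cast hn)
    have hu1 : 1 ≤ uf n := Nat.le_add_left 1 _
    have hun : 16 * ρ * Real.log n ≤ (uf n : ℝ) * Δ ^ 2 := by
      have hceil : 16 * ρ * Real.log n / Δ ^ 2 ≤ (⌈16 * ρ * Real.log n / Δ ^ 2⌉₊ : ℝ) :=
        Nat.le_ceil _
      have hufle : 16 * ρ * Real.log n / Δ ^ 2 ≤ (uf n : ℝ) := by
        rw [huf]
        push_cast
        linarith
      calc 16 * ρ * Real.log n = (16 * ρ * Real.log n / Δ ^ 2) * Δ ^ 2 := by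
            field_simp
        _ ≤ (uf n : ℝ) * Δ ^ 2 := mul_le_mul_of_nonneg_right hufle (by positivity)
    have hLlt : n < 2 ^ (Lf n + 1) := by
      have h1 : n < 2 ^ (Nat.log 2 n + 1) := Nat.lt_pow_succ_log_self (by norm_num) n
      have h2 : (2:ℕ) ^ (Nat.log 2 n + 1) ≤ 2 ^ (Lf n + 1) :=
        Nat.pow_le_pow_right (by norm_num) (by have he : Lf n = Nat.log 2 n + 1 := rfl; omega)
      omega
    have h2L : (2:ℝ) ^ (Lf n) ≤ 2 * n := by
      have h1 : (2:ℕ) ^ (Nat.log 2 n) ≤ n := Nat.pow_log_le_self 2 (by omega)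
      have h2 : (2:ℕ) ^ (Lf n) ≤ 2 * n := by
        have he : Lf n = Nat.log 2 n + 1 := rfl
        rw [he, pow_succ]
        omega
      exact_mod_cast h2
    have hexp := expCount_le hK hX hρpos.le w bst hΔ hgap n (uf n) (Lf n) hu1 hun hLlt
    refine hexp.trans ?_
    have hA := sumA_le hΔ (uf n) n
    have hB := sumB_le hΔ hρpos.le hα hα0 hn h2L
    rw [← hC1] at hA
    rw [← hC2] at hB
    linarith
  -- conclude: big-O against (1+log n)(1+n^α), then little-o
  set c : ℝ := Δ * ((16 * ρ / Δ ^ 2 + 4 + C1) + 4 * C2 * ((Real.log 2)⁻¹ + 2)) with hc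
  have hbigO : (fun n : ℕ => Δ * ucbExpCount hK (rhoLog ρ) P X n w)
      =O[atTop] fun n : ℕ => (1 + Real.log n) * (1 + (n:ℝ) ^ α) := by
    apply Asymptotics.IsBigO.of_bound c
    filter_upwards [Filter.eventually_ge_atTop 1] with n hn
    have hlogn : 0 ≤ Real.log n := Real.log_nonneg (by exact_mod_cast hn)
    have hnr1 : (1:ℝ) ≤ (n:ℝ) := by exact_mod_cast hn
    have hrpow0 : (0:ℝ) ≤ (n:ℝ) ^ α := Real.rpow_nonneg (by positivity) α
    have hG0 : 0 ≤ (1 + Real.log n) * (1 + (n:ℝ) ^ α) := by positivity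
    have hE0 : 0 ≤ ucbExpCount hK (rhoLog ρ) P X n w := by
      rw [ucbExpCount]
      apply integral_nonneg
      intro ω
      positivity
    rw [Real.norm_eq_abs, Real.norm_eq_abs, abs_of_nonneg hG0,
      abs_of_nonneg (by positivity : (0:ℝ) ≤ Δ * ucbExpCount hK (rhoLog ρ) P X n w)]
    -- bound the pieces
    have huf2 : (uf n : ℝ) + 2 ≤ 16 * ρ * Real.log n / Δ ^ 2 + 4 := by
      rw [huf]
      push_cast
      have := Nat.ceil_lt_add_one (by positivity : (0:ℝ) ≤ 16 * ρ * Real.log n / Δ ^ 2)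
      linarith
    have hLf2 : (Lf n : ℝ) + 1 ≤ Real.log n / Real.log 2 + 2 := by
      rw [hLf]
      push_cast
      have h1 : (Nat.log 2 n : ℝ) * Real.log 2 ≤ Real.log n := by
        have h2 : (2:ℕ) ^ (Nat.log 2 n) ≤ n := Nat.pow_log_le_self 2 (by omega)
        have h3 : Real.log ((2:ℝ) ^ (Nat.log 2 n)) ≤ Real.log n :=
          Real.log_le_log (by positivity) (by exact_mod_cast h2)
        rwa [Real.log_pow] at h3
      have h4 : (Nat.log 2 n : ℝ) ≤ Real.log n / Real.log 2 := by
        rw [le_div_iff₀ hlog2pos]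
        exact h1
      linarith
    have h2nα : (2 * (n:ℝ)) ^ α ≤ 2 * (n:ℝ) ^ α := by
      rw [Real.mul_rpow (by norm_num) (by positivity)]
      apply mul_le_mul_of_nonneg_right _ hrpow0
      calc (2:ℝ) ^ α ≤ (2:ℝ) ^ (1:ℝ) :=
            Real.rpow_le_rpow_of_exponent_le (by norm_num) (by rw [hα]; linarith)
        _ = 2 := Real.rpow_one 2
    have hEbound := hmain n hn
    -- assemble
    have hstep1 : 16 * ρ * Real.log n / Δ ^ 2 + 4 + C1
        ≤ (16 * ρ / Δ ^ 2 + 4 + C1) * ((1 + Real.log n) * (1 + (n:ℝ) ^ α)) := by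
      have e1 : 16 * ρ * Real.log n / Δ ^ 2 = (16 * ρ / Δ ^ 2) * Real.log n := by ring
      have h5 : 16 * ρ * Real.log n / Δ ^ 2 + 4 + C1
          ≤ (16 * ρ / Δ ^ 2 + 4 + C1) * (1 + Real.log n) := by
        rw [e1]
        have hco : (0:ℝ) ≤ 16 * ρ / Δ ^ 2 := by positivity
        nlinarith [mul_nonneg hC1p hlogn, mul_nonneg hco hlogn]
      refine h5.trans ?_
      have hf1 : (0:ℝ) ≤ (16 * ρ / Δ ^ 2 + 4 + C1) * (1 + Real.log n) := by positivity
      nlinarith [mul_nonneg hf1 hrpow0]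
    have hstep2 : C2 * (2 * ((Lf n : ℝ) + 1) * (2 * n) ^ α)
        ≤ 4 * C2 * ((Real.log 2)⁻¹ + 2) * ((1 + Real.log n) * (1 + (n:ℝ) ^ α)) := by
      have hL3 : (Lf n : ℝ) + 1 ≤ ((Real.log 2)⁻¹ + 2) * (1 + Real.log n) := by
        have : Real.log n / Real.log 2 + 2 ≤ ((Real.log 2)⁻¹ + 2) * (1 + Real.log n) := by
          rw [div_eq_inv_mul]
          have hinv : 0 ≤ (Real.log 2)⁻¹ := by positivity
          nlinarith [mul_nonneg hinv hlogn]
        linarith [hLf2]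
      have hLp : (0:ℝ) ≤ (Lf n : ℝ) + 1 := by positivity
      have hcoef : (0:ℝ) ≤ ((Real.log 2)⁻¹ + 2) * (1 + Real.log n) := by positivity
      have hnα1 : (n:ℝ) ^ α ≤ 1 + (n:ℝ) ^ α := by linarith
      calc C2 * (2 * ((Lf n : ℝ) + 1) * (2 * n) ^ α)
          ≤ C2 * (2 * ((Lf n : ℝ) + 1) * (2 * (n:ℝ) ^ α)) := by
            apply mul_le_mul_of_nonneg_left _ hC2p
            apply mul_le_mul_of_nonneg_left _ (by positivity)
            push_cast
            exact h2nα
        _ = 4 * C2 * (((Lf n : ℝ) + 1) * (n:ℝ) ^ α) := by ring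
        _ ≤ 4 * C2 * ((((Real.log 2)⁻¹ + 2) * (1 + Real.log n)) * (1 + (n:ℝ) ^ α)) := by
            apply mul_le_mul_of_nonneg_left _ (by positivity)
            exact mul_le_mul hL3 hnα1 hrpow0 hcoef
        _ = 4 * C2 * ((Real.log 2)⁻¹ + 2) * ((1 + Real.log n) * (1 + (n:ℝ) ^ α)) := by ring
    calc Δ * ucbExpCount hK (rhoLog ρ) P X n w
        ≤ Δ * (((uf n : ℝ) + 2) + C1 + C2 * (2 * (Lf n + 1) * (2 * n) ^ α)) :=
          mul_le_mul_of_nonneg_left hEbound hΔ.le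
      _ ≤ Δ * ((16 * ρ * Real.log n / Δ ^ 2 + 4 + C1)
            + C2 * (2 * ((Lf n : ℝ) + 1) * (2 * n) ^ α)) := by
          apply mul_le_mul_of_nonneg_left _ hΔ.le
          linarith
      _ ≤ Δ * ((16 * ρ / Δ ^ 2 + 4 + C1) * ((1 + Real.log n) * (1 + (n:ℝ) ^ α))
            + 4 * C2 * ((Real.log 2)⁻¹ + 2) * ((1 + Real.log n) * (1 + (n:ℝ) ^ α))) := by
          apply mul_le_mul_of_nonneg_left _ hΔ.le
          linarith
      _ = c * ((1 + Real.log n) * (1 + (n:ℝ) ^ α)) := by rw [hc]; ring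
  exact hbigO.trans_isLittleO (littleo_helper hα0 he)

theorem bestMean_two (hK : 0 < 2) (θ : Fin 2 → Measure ℝ) :
    bestMean hK θ = max (mean (θ 0)) (mean (θ 1)) := by
  apply le_antisymm
  · apply Finset.sup'_le
    intro k _
    fin_cases k
    · exact le_max_left _ _
    · exact le_max_right _ _
  · apply max_le
    · exact Finset.le_sup' (fun k => mean (θ k)) (Finset.mem_univ 0)
    · exact Finset.le_sup' (fun k => mean (θ k)) (Finset.mem_univ 1)

end Bandit
namespace Bandit

theorem empMean_const (c : ℝ) {s : ℕ} (hs : 1 ≤ s) : empMean (fun _ => c) s = c := by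
  rw [empMean, Finset.sum_const, Finset.card_range, nsmul_eq_mul]
  have : (s:ℝ) ≠ 0 := by
    have : (0:ℕ) < s := hs
    exact_mod_cast this.ne'
  field_simp

theorem dirac_count_le (hK : 0 < 2) {a b ρ : ℝ} (hρ : 0 < ρ) (hba : b < a)
    (n : ℕ) (hn : 1 ≤ n) :
    (ucbCount hK (rhoLog ρ) (diracTable a b) n 1 : ℝ)
      ≤ ρ * Real.log n / (a - b) ^ 2 + 2 := by
  classical
  set x := diracTable a b with hxdef
  have hx0 : x 0 = fun _ => a := by
    funext u
    rw [hxdef, diracTable, if_pos rfl]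
  have hx1 : x 1 = fun _ => b := by
    funext u
    rw [hxdef, diracTable, if_neg (by decide)]
  set Δ : ℝ := a - b with hΔdef
  have hΔ : 0 < Δ := by rw [hΔdef]; linarith
  have hlogn : 0 ≤ Real.log n := Real.log_nonneg (by exact_mod_cast hn)
  set m : ℕ := ⌊ρ * Real.log n / Δ ^ 2⌋₊ with hm
  set F := rhoLog (K := 2) ρ with hF
  set pull : ℕ → Prop := fun t => ucbArmAux hK F x (ucbCount hK F x t) (t + 1) = 1 with hpull
  set S : Finset ℕ := (Finset.range n).filter (fun t => pull t) with hS
  have hcount : ucbCount hK F x n 1 = S.card := ucbCount_eq_card hK n 1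
  have hsub : S ⊆ S.filter (fun t => t < 2) ∪ S.filter (fun t => 2 ≤ t) := by
    intro t ht
    rcases Nat.lt_or_ge t 2 with h | h
    · exact Finset.mem_union_left _ (Finset.mem_filter.2 ⟨ht, h⟩)
    · exact Finset.mem_union_right _ (Finset.mem_filter.2 ⟨ht, h⟩)
  have h1 : (S.filter (fun t => t < 2)).card ≤ 1 := by
    have : S.filter (fun t => t < 2) ⊆ {1} := by
      intro t ht
      obtain ⟨htS, ht2⟩ := Finset.mem_filter.1 ht
      have hpt : pull t := (Finset.mem_filter.1 htS).2
      interval_cases t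
      · exfalso
        rw [hpull] at hpt
        rw [ucbArmAux, dif_pos (by norm_num)] at hpt
        simp [Fin.ext_iff] at hpt
      · exact Finset.mem_singleton_self 1
    calc (S.filter (fun t => t < 2)).card ≤ ({1} : Finset ℕ).card := Finset.card_le_card this
      _ = 1 := rfl
  have hkey : ∀ t ∈ S.filter (fun t => 2 ≤ t), 1 ≤ ucbCount hK F x t 1
      ∧ ucbCount hK F x t 1 ≤ m := by
    intro t ht
    obtain ⟨htS, ht2⟩ := Finset.mem_filter.1 ht
    have htn : t < n := Finset.mem_range.1 (Finset.mem_filter.1 htS).1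
    have hpt : pull t := (Finset.mem_filter.1 htS).2
    refine ⟨ucbCount_pos hK ht2 1, ?_⟩
    have hidx := pull_index_le hK (show 2 < t + 1 by omega) hpt 0
    set c0 := ucbCount hK F x t 0 with hc0
    set c1 := ucbCount hK F x t 1 with hc1
    have hc01 : 1 ≤ c0 := ucbCount_pos hK ht2 0
    have hc11 : 1 ≤ c1 := ucbCount_pos hK ht2 1
    have hc1R : (0:ℝ) < (c1 : ℝ) := by exact_mod_cast hc11
    have hFj : ∀ j : Fin 2, F j (t + 1) = ρ * Real.log ((t + 1 : ℕ) : ℝ) := fun j => rfl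
    rw [hFj, hFj, hx0, hx1, empMean_const a hc01, empMean_const b hc11] at hidx
    have hlogt0 : 0 ≤ Real.log ((t + 1 : ℕ) : ℝ) := by
      apply Real.log_nonneg
      have : (1:ℕ) ≤ t + 1 := by omega
      exact_mod_cast this
    have hz0 : 0 ≤ ρ * Real.log ((t + 1 : ℕ) : ℝ) / (c1 : ℝ) := by positivity
    have hsqrtle : Δ ≤ Real.sqrt (ρ * Real.log ((t + 1 : ℕ) : ℝ) / (c1 : ℝ)) := by
      have h0 : (0:ℝ) ≤ Real.sqrt (ρ * Real.log ((t + 1 : ℕ) : ℝ) / (c0 : ℝ)) :=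
        Real.sqrt_nonneg _
      rw [hΔdef]
      linarith
    have hsq : Δ ^ 2 ≤ ρ * Real.log ((t + 1 : ℕ) : ℝ) / (c1 : ℝ) := by
      have := pow_le_pow_left₀ hΔ.le hsqrtle 2
      rwa [Real.sq_sqrt hz0] at this
    have hc1le : (c1 : ℝ) ≤ ρ * Real.log ((t + 1 : ℕ) : ℝ) / Δ ^ 2 := by
      rw [le_div_iff₀ (by positivity)]
      rw [le_div_iff₀ hc1R] at hsq
      linarith
    have hlogle : Real.log ((t + 1 : ℕ) : ℝ) ≤ Real.log n := by
      apply Real.log_le_log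
      · have : (0:ℕ) < t + 1 := by omega
        exact_mod_cast this
      · exact_mod_cast htn
    have hc1le' : (c1 : ℝ) ≤ ρ * Real.log n / Δ ^ 2 := by
      refine hc1le.trans ?_
      apply div_le_div_of_nonneg_right _ (by positivity)
      exact mul_le_mul_of_nonneg_left hlogle hρ.le
    exact Nat.le_floor hc1le'
  have h2 : (S.filter (fun t => 2 ≤ t)).card ≤ m := by
    have hmaps : ∀ t ∈ S.filter (fun t => 2 ≤ t),
        ucbCount hK F x t 1 ∈ Finset.Icc 1 m := fun t ht =>
      Finset.mem_Icc.2 ⟨(hkey t ht).1, (hkey t ht).2⟩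
    have hinj2 : Set.InjOn (fun t => ucbCount hK F x t 1) ↑(S.filter (fun t => 2 ≤ t)) := by
      intro t ht t' ht' he
      by_contra hne
      have hpt : pull t :=
        (Finset.mem_filter.1 (Finset.filter_subset _ _ (Finset.mem_coe.1 ht))).2
      have hpt' : pull t' :=
        (Finset.mem_filter.1 (Finset.filter_subset _ _ (Finset.mem_coe.1 ht'))).2
      simp only at he
      rcases Nat.lt_or_ge t t' with h | h
      · have := ucbCount_lt_of_pull hK h 1 hpt
        omega
      · have h' : t' < t := by omega
        have := ucbCount_lt_of_pull hK h' 1 hpt'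
        omega
    have := Finset.card_le_card_of_injOn (fun t => ucbCount hK F x t 1) hmaps hinj2
    simpa [Nat.card_Icc] using this
  have hcard : S.card ≤ 1 + m := by
    calc S.card ≤ (S.filter (fun t => t < 2) ∪ S.filter (fun t => 2 ≤ t)).card :=
          Finset.card_le_card hsub
      _ ≤ (S.filter (fun t => t < 2)).card + (S.filter (fun t => 2 ≤ t)).card :=
          Finset.card_union_le _ _
      _ ≤ 1 + m := by omega
  have hmle : (m : ℝ) ≤ ρ * Real.log n / Δ ^ 2 := Nat.floor_le (by positivity)
  calc (ucbCount hK F x n 1 : ℝ) = (S.card : ℝ) := by rw [hcount]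
    _ ≤ 1 + (m : ℝ) := by exact_mod_cast hcard
    _ ≤ ρ * Real.log n / Δ ^ 2 + 2 := by linarith

end Bandit
namespace Bandit

/-- There exist an environment θ ∈ Θ and a constant c > 0 such that for
every α ∈ [0,1) some α-consistent policy and suboptimal arm k satisfy
liminf_n E_θ[T_k(n)]/((1-α) log n) ≤ c. Concretely, for θ = (δ_a, δ_b) with 0 ≤ b < a ≤ 1
and Δ = a - b, the policy UCB((1-α)/2) is α-consistent and satisfies
liminf_n E_θ[T_2(n)]/((1-α) log n) ≤ 1/(2Δ²). -/
theorem alpha_consistent_lower_bound_optimal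
    (Θk : Fin 2 → Set (Measure ℝ)) (hΘ : Admissible Θk)
    (a b : ℝ) (hb : 0 ≤ b) (hba : b < a) (ha : a ≤ 1)
    (Δ : ℝ) (hΔ : Δ = a - b)
    (α : ℝ) (hα0 : 0 ≤ α) (hα1 : α < 1) :
    (∀ e > α, ∀ θ ∈ envSet Θk,
      ∀ (Ω : Type) (_ : MeasurableSpace Ω) (P : Measure Ω)
        (X : Fin 2 → ℕ → Ω → ℝ), IsProbabilityMeasure P → IsRewardTable P θ X →
        (fun n : ℕ => ucbRegret (Nat.succ_pos 1) (rhoLog ((1 - α) / 2)) P θ X n)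
          =o[Filter.atTop] fun n : ℕ => (n : ℝ) ^ e) ∧
    Filter.atTop.liminf
        (fun n : ℕ =>
          (((ucbCount (Nat.succ_pos 1) (rhoLog ((1 - α) / 2)) (diracTable a b) n 1 : ℝ) /
            ((1 - α) * Real.log n) : ℝ) : EReal)) ≤
      ((1 / (2 * Δ ^ 2) : ℝ) : EReal) := by
  have hρpos : 0 < (1 - α) / 2 := by linarith
  have hαeq : α = 1 - 2 * ((1 - α) / 2) := by ring
  constructor
  · -- α-consistency of UCB((1-α)/2)
    intro e he θ hθ Ω mΩ P X hP hX
    haveI := hP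
    rcases lt_trichotomy (mean (θ 0)) (mean (θ 1)) with hlt | heq | hgt
    · have hbm : bestMean (Nat.succ_pos 1) θ = mean (θ 1) := by
        rw [bestMean_two]; exact max_eq_right hlt.le
      have hfun : (fun n : ℕ => ucbRegret (Nat.succ_pos 1) (rhoLog ((1 - α) / 2)) P θ X n)
          = fun n : ℕ => (mean (θ 1) - mean (θ 0)) *
              ucbExpCount (Nat.succ_pos 1) (rhoLog ((1 - α) / 2)) P X n 0 := by
        funext n
        rw [ucbRegret, Fin.sum_univ_two, gap, gap, hbm]
        ring
      rw [hfun]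
      exact regret_term_littleo (Nat.succ_pos 1) hX hρpos hαeq hα0 0 1 hlt he
    · have hbm : bestMean (Nat.succ_pos 1) θ = mean (θ 0) := by
        rw [bestMean_two, ← heq, max_self]
      have hfun : (fun n : ℕ => ucbRegret (Nat.succ_pos 1) (rhoLog ((1 - α) / 2)) P θ X n)
          = fun _ : ℕ => (0:ℝ) := by
        funext n
        rw [ucbRegret, Fin.sum_univ_two, gap, gap, hbm, heq]
        ring
      rw [hfun]
      exact Asymptotics.isLittleO_zero _ _
    · have hbm : bestMean (Nat.succ_pos 1) θ = mean (θ 0) := by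
        rw [bestMean_two]; exact max_eq_left hgt.le
      have hfun : (fun n : ℕ => ucbRegret (Nat.succ_pos 1) (rhoLog ((1 - α) / 2)) P θ X n)
          = fun n : ℕ => (mean (θ 0) - mean (θ 1)) *
              ucbExpCount (Nat.succ_pos 1) (rhoLog ((1 - α) / 2)) P X n 1 := by
        funext n
        rw [ucbRegret, Fin.sum_univ_two, gap, gap, hbm]
        ring
      rw [hfun]
      exact regret_term_littleo (Nat.succ_pos 1) hX hρpos hαeq hα0 1 0 hgt he
  · -- liminf bound in the deterministic environment
    have hΔpos : 0 < Δ := by rw [hΔ]; linarith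
    set c : ℝ := 1 / (2 * Δ ^ 2) with hc
    have hquot : ∀ᶠ n : ℕ in atTop,
        (((ucbCount (Nat.succ_pos 1) (rhoLog ((1 - α) / 2)) (diracTable a b) n 1 : ℝ) /
            ((1 - α) * Real.log n) : ℝ) : EReal)
          ≤ ((2 / ((1 - α) * Real.log n) + c : ℝ) : EReal) := by
      filter_upwards [Filter.eventually_ge_atTop 2] with n hn
      have hlogpos : 0 < Real.log n := Real.log_pos (by exact_mod_cast hn)
      have hd : 0 < (1 - α) * Real.log n := by
        have h1 : (0:ℝ) < 1 - α := by linarith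
        positivity
      rw [EReal.coe_le_coe_iff, div_le_iff₀ hd]
      have hcount := dirac_count_le (Nat.succ_pos 1) hρpos hba n (by omega)
      rw [← hΔ] at hcount
      have heq1 : (2 / ((1 - α) * Real.log n) + c) * ((1 - α) * Real.log n)
          = 2 + c * ((1 - α) * Real.log n) := by
        rw [add_mul, div_mul_cancel₀ _ hd.ne']
      have heq2 : c * ((1 - α) * Real.log n) = (1 - α) / 2 * Real.log n / Δ ^ 2 := by
        rw [hc]
        field_simp
      rw [heq1, heq2]
      linarith
    have htend : Filter.Tendsto
        (fun n : ℕ => ((2 / ((1 - α) * Real.log n) + c : ℝ) : EReal)) atTop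
        (nhds ((c : ℝ) : EReal)) := by
      rw [EReal.tendsto_coe]
      have h1 : Filter.Tendsto (fun n : ℕ => (1 - α) * Real.log n) atTop atTop := by
        apply Filter.Tendsto.const_mul_atTop (by linarith : (0:ℝ) < 1 - α)
        exact Real.tendsto_log_atTop.comp tendsto_natCast_atTop_atTop
      have h2 : Filter.Tendsto (fun n : ℕ => 2 / ((1 - α) * Real.log n)) atTop (nhds 0) :=
        Filter.Tendsto.div_atTop tendsto_const_nhds h1
      have := h2.add (tendsto_const_nhds (x := c))
      simpa using this
    calc Filter.atTop.liminf
          (fun n : ℕ =>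
            (((ucbCount (Nat.succ_pos 1) (rhoLog ((1 - α) / 2)) (diracTable a b) n 1 : ℝ) /
              ((1 - α) * Real.log n) : ℝ) : EReal))
        ≤ Filter.atTop.liminf
            (fun n : ℕ => ((2 / ((1 - α) * Real.log n) + c : ℝ) : EReal)) :=
          Filter.liminf_le_liminf hquot
      _ = ((c : ℝ) : EReal) := htend.liminf_eq
      _ = ((1 / (2 * Δ ^ 2) : ℝ) : EReal) := by rw [hc]

end Bandit
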